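/- Let α > 1, δ > 1 and a > 1/(δ−1), and define b:[0,1]→(0,∞) by b(z) = (1 − z/α)^δ + a. Then b is twice continuously differentiable with b(0) ≠ b(1), b'(z) = −(δ/α)(1 − z/α)^{δ−1} < 0 for all z ∈ [0,1], and b''(z)b(z) − b'(z)² > 0 for all z ∈ [0,1]; in particular b satisfies the conditions under which G(z) = (log b(z) − log b(0))/(log b(1) − log b(0)) is an exposure curve, so the power logarithmic linked exposure example defines a well-defined distribution. -/

import Mathlib

/-- An exposure curve: a function `G : [0,1] → ℝ` that is twice continuously
differentiable (with continuous second derivative on `[0,1]`), non-decreasing,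
concave, with `G 0 = 0`, `G 1 = 1` and `G' 0 > 0`. -/
def IsExposureCurve (G : ℝ → ℝ) : Prop :=
  MonotoneOn G (Set.Icc 0 1) ∧ ConcaveOn ℝ (Set.Icc 0 1) G ∧
  G 0 = 0 ∧ G 1 = 1 ∧
  ∃ G' G'' : ℝ → ℝ,
    (∀ z ∈ Set.Icc (0:ℝ) 1, HasDerivWithinAt G (G' z) (Set.Icc 0 1) z) ∧
    (∀ z ∈ Set.Icc (0:ℝ) 1, HasDerivWithinAt G' (G'' z) (Set.Icc 0 1) z) ∧
    ContinuousOn G'' (Set.Icc 0 1) ∧ 0 < G' 0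

/-- For `α > 1`, `δ > 1` and `a > 1/(δ-1)`, the inner function
`b z = (1 - z/α)^δ + a` is positive and twice continuously differentiable on `[0,1]`
with `b 0 ≠ b 1`, `b' z = -(δ/α)(1 - z/α)^(δ-1) < 0` and
`b'' z b z - (b' z)² > 0` on `[0,1]`; in particular the power logarithmic linked
curve `G z = (log (b z) - log (b 0))/(log (b 1) - log (b 0))` is an exposure curve, so
the power logarithmic linked exposure example defines a well-defined distribution. -/
theorem statement14 (α δ a : ℝ) (hα : 1 < α) (hδ : 1 < δ) (ha : 1 / (δ - 1) < a) :
    let b : ℝ → ℝ := fun z => (1 - z / α) ^ δ + a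
    let b' : ℝ → ℝ := fun z => -(δ / α) * (1 - z / α) ^ (δ - 1)
    let b'' : ℝ → ℝ := fun z => δ * (δ - 1) / α ^ 2 * (1 - z / α) ^ (δ - 2)
    (∀ z ∈ Set.Icc (0:ℝ) 1, 0 < b z) ∧
    b 0 ≠ b 1 ∧
    (∀ z ∈ Set.Icc (0:ℝ) 1, HasDerivWithinAt b (b' z) (Set.Icc 0 1) z) ∧
    (∀ z ∈ Set.Icc (0:ℝ) 1, HasDerivWithinAt b' (b'' z) (Set.Icc 0 1) z) ∧
    ContinuousOn b'' (Set.Icc 0 1) ∧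
    (∀ z ∈ Set.Icc (0:ℝ) 1, b' z < 0) ∧
    (∀ z ∈ Set.Icc (0:ℝ) 1, 0 < b'' z * b z - (b' z) ^ 2) ∧
    IsExposureCurve
      (fun z => (Real.log (b z) - Real.log (b 0)) / (Real.log (b 1) - Real.log (b 0))) := by
  intro b b' b''
  have hα0 : (0:ℝ) < α := by linarith
  have hδ1 : (0:ℝ) < δ - 1 := by linarith
  have ha0 : 0 < a := lt_trans (by positivity) ha
  have ha1 : 1 < (δ - 1) * a := by
    have h := (div_lt_iff₀ hδ1).mp ha
    linarith [h, mul_comm a (δ - 1)]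
  -- base positivity
  have hxpos : ∀ z : ℝ, z < α → 0 < 1 - z / α := by
    intro z hz
    have : z / α < 1 := (div_lt_one hα0).mpr hz
    linarith
  have hmem : ∀ z ∈ Set.Icc (0:ℝ) 1, z < α := fun z hz => lt_of_le_of_lt hz.2 hα
  have hxle : ∀ z ∈ Set.Icc (0:ℝ) 1, 1 - z / α ≤ 1 := by
    intro z hz
    have : 0 ≤ z / α := div_nonneg hz.1 hα0.le
    linarith
  have hbpos : ∀ z : ℝ, z < α → 0 < b z := by
    intro z hz
    have := Real.rpow_pos_of_pos (hxpos z hz) δ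
    show 0 < (1 - z / α) ^ δ + a
    linarith
  -- derivatives of b
  have hlin : ∀ z : ℝ, HasDerivAt (fun y : ℝ => 1 - y / α) (-(1/α)) z := by
    intro z
    simpa using ((hasDerivAt_id z).div_const α).const_sub 1
  have hb : ∀ z : ℝ, z < α → HasDerivAt b (b' z) z := by
    intro z hz
    have h2 := Real.hasDerivAt_rpow_const (x := 1 - z / α) (p := δ) (Or.inl (hxpos z hz).ne')
    have := (h2.comp z (hlin z)).add_const a
    refine this.congr_deriv ?_
    simp [Function.comp, b']
    ring
  have hb' : ∀ z : ℝ, z < α → HasDerivAt b' (b'' z) z := by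
    intro z hz
    have h2 := Real.hasDerivAt_rpow_const (x := 1 - z / α) (p := δ - 1) (Or.inl (hxpos z hz).ne')
    have := (h2.comp z (hlin z)).const_mul (-(δ/α))
    refine this.congr_deriv ?_
    simp [Function.comp, b'']
    ring
  -- b 0 vs b 1
  have hb0 : b 0 = 1 + a := by
    show (1 - 0 / α) ^ δ + a = 1 + a
    norm_num
  have hb1lt : b 1 < b 0 := by
    have hx1 : 0 < 1 - 1 / α := hxpos 1 hα
    have : (1 - 1/α) ^ δ < 1 := by
      apply Real.rpow_lt_one hx1.le _ (by linarith)
      have : 0 < 1 / α := by positivity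
      linarith
    rw [hb0]
    show (1 - 1 / α) ^ δ + a < 1 + a
    linarith
  have hbne : b 0 ≠ b 1 := hb1lt.ne'
  -- b' negative
  have hb'neg : ∀ z : ℝ, z < α → b' z < 0 := by
    intro z hz
    have h1 := Real.rpow_pos_of_pos (hxpos z hz) (δ - 1)
    have h2 : 0 < δ / α := by positivity
    show -(δ / α) * (1 - z / α) ^ (δ - 1) < 0
    nlinarith
  -- key positivity
  have key : ∀ z ∈ Set.Icc (0:ℝ) 1, 0 < b'' z * b z - (b' z) ^ 2 := by
    intro z hz
    have hzα := hmem z hz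
    have hx : 0 < 1 - z / α := hxpos z hzα
    have hu1 : (1 - z / α) ^ δ ≤ 1 := Real.rpow_le_one hx.le (hxle z hz) (by linarith)
    have htpos : 0 < (1 - z / α) ^ (δ - 2) := Real.rpow_pos_of_pos hx _
    have hsq : (1 - z / α) ^ (δ-1) * (1 - z / α) ^ (δ-1)
        = (1 - z / α) ^ (δ-2) * (1 - z / α) ^ δ := by
      rw [← Real.rpow_add hx, ← Real.rpow_add hx]; ring_nf
    show 0 < δ * (δ - 1) / α ^ 2 * (1 - z / α) ^ (δ - 2) * ((1 - z / α) ^ δ + a)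
        - (-(δ / α) * (1 - z / α) ^ (δ - 1)) ^ 2
    have hrw : δ * (δ - 1) / α ^ 2 * (1 - z / α) ^ (δ - 2) * ((1 - z / α) ^ δ + a)
        - (-(δ / α) * (1 - z / α) ^ (δ - 1)) ^ 2
        = δ * (δ - 1) / α ^ 2 * (1 - z / α) ^ (δ - 2) * ((1 - z / α) ^ δ + a)
        - δ ^ 2 / α ^ 2 * ((1 - z / α) ^ (δ-1) * (1 - z / α) ^ (δ-1)) := by ring
    rw [hrw, hsq]
    have hrw2 : δ * (δ - 1) / α ^ 2 * (1 - z / α) ^ (δ - 2) * ((1 - z / α) ^ δ + a)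
        - δ ^ 2 / α ^ 2 * ((1 - z / α) ^ (δ-2) * (1 - z / α) ^ δ)
        = δ / α ^ 2 * (1 - z / α) ^ (δ - 2) * ((δ - 1) * a - (1 - z / α) ^ δ) := by ring
    rw [hrw2]
    have : 0 < (δ - 1) * a - (1 - z / α) ^ δ := by linarith
    positivity
  -- continuity
  have hbasecont : ContinuousOn (fun z : ℝ => 1 - z / α) (Set.Icc 0 1) := by
    fun_prop
  have hbasene : ∀ z ∈ Set.Icc (0:ℝ) 1, (1 - z / α) ≠ 0 ∨ (0:ℝ) ≤ δ - 2 :=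
    fun z hz => Or.inl (hxpos z (hmem z hz)).ne'
  have hb''cont : ContinuousOn b'' (Set.Icc 0 1) :=
    continuousOn_const.mul (hbasecont.rpow_const hbasene)
  -- G and its derivatives
  set L := Real.log (b 1) - Real.log (b 0) with hL
  have hLneg : L < 0 := by
    have := Real.log_lt_log (hbpos 1 hα) hb1lt
    rw [hL]; linarith
  have hLne : L ≠ 0 := hLneg.ne
  set G : ℝ → ℝ := fun z => (Real.log (b z) - Real.log (b 0)) / L with hGdef
  set Gd : ℝ → ℝ := fun z => (b' z / b z) / L with hGddef
  set Gdd : ℝ → ℝ := fun z => ((b'' z * b z - (b' z) ^ 2) / (b z) ^ 2) / L with hGdddef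
  have hG : ∀ z : ℝ, z < α → HasDerivAt G (Gd z) z := by
    intro z hz
    exact (((hb z hz).log (hbpos z hz).ne').sub_const (Real.log (b 0))).div_const L
  have hGd : ∀ z : ℝ, z < α → HasDerivAt Gd (Gdd z) z := by
    intro z hz
    have h := ((hb' z hz).div (hb z hz) (hbpos z hz).ne').div_const L
    have heq : Gdd z = (b'' z * b z - b' z * b' z) / b z ^ 2 / L := by
      show (b'' z * b z - b' z ^ 2) / b z ^ 2 / L = _
      ring
    rw [heq]
    exact h
  have hGdpos : ∀ z : ℝ, z < α → 0 < Gd z := by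
    intro z hz
    have h1 : b' z / b z < 0 := div_neg_of_neg_of_pos (hb'neg z hz) (hbpos z hz)
    exact div_pos_of_neg_of_neg h1 hLneg
  have hGddneg : ∀ z ∈ Set.Icc (0:ℝ) 1, Gdd z < 0 := by
    intro z hz
    have h1 : 0 < (b'' z * b z - (b' z) ^ 2) / (b z) ^ 2 :=
      div_pos (key z hz) (pow_pos (hbpos z (hmem z hz)) 2)
    exact div_neg_of_pos_of_neg h1 hLneg
  have hGcont : ContinuousOn G (Set.Icc 0 1) := fun z hz =>
    ((hG z (hmem z hz)).continuousAt).continuousWithinAt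
  have hIoo : interior (Set.Icc (0:ℝ) 1) = Set.Ioo 0 1 := interior_Icc
  -- assemble
  refine ⟨fun z hz => hbpos z (hmem z hz), hbne,
    fun z hz => (hb z (hmem z hz)).hasDerivWithinAt,
    fun z hz => (hb' z (hmem z hz)).hasDerivWithinAt,
    hb''cont, fun z hz => hb'neg z (hmem z hz), key, ?_, ?_, ?_, ?_, ?_⟩
  · -- MonotoneOn
    refine (strictMonoOn_of_hasDerivWithinAt_pos (convex_Icc 0 1) hGcont
      (f' := Gd) ?_ ?_).monotoneOn
    · intro z hz
      rw [hIoo] at hz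
      exact (hG z (by linarith [hz.2])).hasDerivWithinAt
    · intro z hz
      rw [hIoo] at hz
      exact hGdpos z (by linarith [hz.2])
  · -- ConcaveOn
    refine concaveOn_of_hasDerivWithinAt2_nonpos (convex_Icc 0 1) hGcont
      (f' := Gd) (f'' := Gdd) ?_ ?_ ?_
    · intro z hz
      rw [hIoo] at hz
      exact (hG z (by linarith [hz.2])).hasDerivWithinAt
    · intro z hz
      rw [hIoo] at hz
      exact (hGd z (by linarith [hz.2])).hasDerivWithinAt
    · intro z hz
      rw [hIoo] at hz
      exact (hGddneg z ⟨hz.1.le, hz.2.le⟩).le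
  · show G 0 = 0
    simp [hGdef]
  · show G 1 = 1
    rw [hGdef]
    exact div_self hLne
  · refine ⟨Gd, Gdd, fun z hz => (hG z (hmem z hz)).hasDerivWithinAt,
      fun z hz => (hGd z (hmem z hz)).hasDerivWithinAt, ?_, hGdpos 0 (by linarith)⟩
    -- continuity of Gdd
    have hbcont : ContinuousOn b (Set.Icc 0 1) :=
      (hbasecont.rpow_const fun z hz => Or.inl (hxpos z (hmem z hz)).ne').add continuousOn_const
    have hb'cont : ContinuousOn b' (Set.Icc 0 1) :=
      continuousOn_const.mul (hbasecont.rpow_const fun z hz => Or.inl (hxpos z (hmem z hz)).ne')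
    exact (((hb''cont.mul hbcont).sub (hb'cont.pow 2)).div (hbcont.pow 2)
      fun z hz => pow_ne_zero _ (hbpos z (hmem z hz)).ne').div_const L
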